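/- Let Λ be an invertible d×d real matrix and Σ_a a d×d real matrix with Λ·Σ_a = Σ_a·Λ, and a ∈ ℝ. Define Σ(t) := exp(−2(t−a)·Λ)·Σ_a − (1/2)·exp(−2(t−a)·Λ)·Λ⁻¹·(I − exp(2(t−a)·Λ)). Then Σ(a) = Σ_a and for every t ∈ ℝ, Σ is differentiable at t with derivative Σ′(t) = −Λ·Σ(t) − Σ(t)·Λ + I. -/

import Mathlib

open scoped Matrix
open NormedSpace

attribute [local instance] Matrix.linftyOpNormedAddCommGroup Matrix.linftyOpNormedRing
  Matrix.linftyOpNormedAlgebra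

private lemma cov_alg_identity {d : ℕ} (Λ Li F G Sa : Matrix (Fin d) (Fin d) ℝ)
    (hLi : Λ * Li = 1) (hiL : Li * Λ = 1) (hFG : F * G = 1)
    (hLF : Λ * F = F * Λ) (hiG : Li * G = G * Li)
    (hSa : Λ * Sa = Sa * Λ) :
    -(Λ * (F * Sa - (1 / 2 : ℝ) • (F * Li * (1 - G)))) -
      (F * Sa - (1 / 2 : ℝ) • (F * Li * (1 - G))) * Λ + 1 =
    ((-2 : ℝ) • (F * Λ)) * Sa -
      (1 / 2 : ℝ) • (((-2 : ℝ) • (F * Λ)) * Li * (1 - G) +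
        (F * Li) * (0 - (2 : ℝ) • (G * Λ))) := by
  have hFiG : F * Li * G = Li := by
    rw [mul_assoc, hiG, ← mul_assoc, hFG, one_mul]
  have e4 : F * Λ * Li * (1 - G) = F - 1 := by
    rw [mul_assoc F Λ Li, hLi, mul_one, mul_sub, mul_one, hFG]
  have e1 : Λ * (F * Li * (1 - G)) = F - 1 := by
    rw [← mul_assoc, ← mul_assoc, hLF, e4]
  have e2 : F * Li * (1 - G) * Λ = F - 1 := by
    rw [mul_assoc, sub_mul, one_mul, mul_sub, mul_assoc F Li Λ, hiL, mul_one,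
      ← mul_assoc, hFiG, hiL]
  have e3a : Λ * (F * Sa) = F * Λ * Sa := by rw [← mul_assoc, hLF]
  have e3b : F * Sa * Λ = F * Λ * Sa := by
    rw [mul_assoc, ← hSa, ← mul_assoc]
  have e5 : F * Li * ((2 : ℝ) • (G * Λ)) = (2 : ℝ) • 1 := by
    rw [mul_smul_comm, ← mul_assoc, hFiG, hiL]
  have hL : Λ * (F * Sa - (1 / 2 : ℝ) • (F * Li * (1 - G)))
      = F * Λ * Sa - (1 / 2 : ℝ) • (F - 1) := by
    rw [mul_sub, mul_smul_comm, e3a, e1]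
  have hR : (F * Sa - (1 / 2 : ℝ) • (F * Li * (1 - G))) * Λ
      = F * Λ * Sa - (1 / 2 : ℝ) • (F - 1) := by
    rw [sub_mul, smul_mul_assoc, e3b, e2]
  rw [hL, hR, smul_mul_assoc, smul_mul_assoc, smul_mul_assoc, e4, zero_sub, mul_neg, e5]
  module

/-- Closed-form covariance of the locally linear controlled SDE: with
`Σ t = exp (-2(t-a) Λ) Σ_a - (1/2) exp (-2(t-a) Λ) Λ⁻¹ (I - exp (2(t-a) Λ))`
(and `Λ` commuting with `Σ_a`), we have `Σ a = Σ_a` and the Lyapunov ODE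
`Σ' t = -Λ Σ t - Σ t Λ + 1`. -/
theorem cov_ode_closed_form {d : ℕ} (Λ : Matrix (Fin d) (Fin d) ℝ) (hΛ : IsUnit Λ)
    (Sa : Matrix (Fin d) (Fin d) ℝ) (hcomm : Λ * Sa = Sa * Λ) (a : ℝ)
    (S : ℝ → Matrix (Fin d) (Fin d) ℝ)
    (hS : ∀ t, S t =
      NormedSpace.exp ((-(2 * (t - a))) • Λ) * Sa -
      (1 / 2 : ℝ) • (NormedSpace.exp ((-(2 * (t - a))) • Λ) * Λ⁻¹ *
        (1 - NormedSpace.exp ((2 * (t - a)) • Λ)))) :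
    S a = Sa ∧ ∀ t : ℝ, HasDerivAt S (-(Λ * S t) - S t * Λ + 1) t := by
  have hdet : IsUnit Λ.det := (Matrix.isUnit_iff_isUnit_det Λ).mp hΛ
  have hLi : Λ * Λ⁻¹ = 1 := Matrix.mul_nonsing_inv Λ hdet
  have hiL : Λ⁻¹ * Λ = 1 := Matrix.nonsing_inv_mul Λ hdet
  have hCi : Commute Λ⁻¹ Λ := by unfold Commute SemiconjBy; rw [hiL, hLi]
  constructor
  · rw [hS a]
    simp [sub_self, exp_zero]
  · intro t
    have hSfun : S = fun t => exp ((-(2 * (t - a))) • Λ) * Sa -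
        (1 / 2 : ℝ) • (exp ((-(2 * (t - a))) • Λ) * Λ⁻¹ *
          (1 - exp ((2 * (t - a)) • Λ))) := funext hS
    have hu1 : HasDerivAt (fun t : ℝ => -(2 * (t - a))) (-2) t := by
      have h := (((hasDerivAt_id t).sub_const a).const_mul 2).neg
      simp only [id] at h
      exact h.congr_deriv (by norm_num)
    have hu2 : HasDerivAt (fun t : ℝ => 2 * (t - a)) 2 t := by
      simpa using ((hasDerivAt_id t).sub_const a).const_mul 2
    have hf : HasDerivAt (fun t : ℝ => exp ((-(2 * (t - a))) • Λ))
        ((-2 : ℝ) • (exp ((-(2 * (t - a))) • Λ) * Λ)) t := by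
      have := (hasDerivAt_exp_smul_const (𝕂 := ℝ) Λ (-(2 * (t - a)))).scomp t hu1
      simp [Function.comp_def] at this ⊢
      exact this
    have hg : HasDerivAt (fun t : ℝ => exp ((2 * (t - a)) • Λ))
        ((2 : ℝ) • (exp ((2 * (t - a)) • Λ) * Λ)) t := by
      have := (hasDerivAt_exp_smul_const (𝕂 := ℝ) Λ (2 * (t - a))).scomp t hu2
      simp [Function.comp_def] at this ⊢
      exact this
    have h2 : HasDerivAt (fun t : ℝ => exp ((-(2 * (t - a))) • Λ) * Λ⁻¹ *
          (1 - exp ((2 * (t - a)) • Λ)))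
        (((-2 : ℝ) • (exp ((-(2 * (t - a))) • Λ) * Λ)) * Λ⁻¹ *
            (1 - exp ((2 * (t - a)) • Λ)) +
          (exp ((-(2 * (t - a))) • Λ) * Λ⁻¹) *
            (0 - (2 : ℝ) • (exp ((2 * (t - a)) • Λ) * Λ))) t :=
      (hf.mul_const Λ⁻¹).mul
        ((hasDerivAt_const t (1 : Matrix (Fin d) (Fin d) ℝ)).sub hg)
    have h3 : HasDerivAt S
        (((-2 : ℝ) • (exp ((-(2 * (t - a))) • Λ) * Λ)) * Sa -
          (1 / 2 : ℝ) • (((-2 : ℝ) • (exp ((-(2 * (t - a))) • Λ) * Λ)) * Λ⁻¹ *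
              (1 - exp ((2 * (t - a)) • Λ)) +
            (exp ((-(2 * (t - a))) • Λ) * Λ⁻¹) *
              (0 - (2 : ℝ) • (exp ((2 * (t - a)) • Λ) * Λ)))) t := by
      rw [hSfun]
      exact (hf.mul_const Sa).sub (h2.const_smul (1 / 2 : ℝ))
    convert h3 using 1
    rw [hS t]
    refine cov_alg_identity Λ Λ⁻¹ _ _ Sa hLi hiL ?_ ?_ ?_ hcomm
    · have h : exp ((-(2 * (t - a)) + 2 * (t - a)) • Λ) =
          exp ((-(2 * (t - a))) • Λ) * exp ((2 * (t - a)) • Λ) := by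
        rw [add_smul]; exact exp_add_of_commute (((Commute.refl Λ).smul_left _).smul_right _)
      rw [← h]
      norm_num [exp_zero]
    · exact (((Commute.refl Λ).smul_right _).exp_right).eq
    · exact ((hCi.smul_right _).exp_right).eq
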